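/- The Jacobian ring of the Hori–Vafa superpotential W = x + y + t/(xy), namely ℂ[x^±, y^±]/(x∂W/∂x, y∂W/∂y), is isomorphic as a ring to ℂ[z]/(z³ − t) (for t ≠ 0), which matches the small quantum cohomology ring QH*(ℙ²) = ℂ[H]/(H³ − t) under H ↦ x. -/

import Mathlib

set_option maxHeartbeats 800000

/-- The Laurent polynomial ring `ℂ[x^±, y^±]`, modeled as the group algebra
of `ℤ²` over `ℂ`. -/
abbrev LaurentTwo := AddMonoidAlgebra ℂ (ℤ × ℤ)

/-- The monomial `x^i y^j` with coefficient `c`. -/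
noncomputable def laurentMono (i j : ℤ) (c : ℂ) : LaurentTwo :=
  AddMonoidAlgebra.single (i, j) c

open Polynomial

namespace HVaux

noncomputable section

variable (t : ℂ)

lemma laurentMono_mul (i j i' j' : ℤ) (c c' : ℂ) :
    laurentMono i j c * laurentMono i' j' c' = laurentMono (i + i') (j + j') (c * c') :=
  AddMonoidAlgebra.single_mul_single _ _ _ _

lemma laurentMono_one : laurentMono 0 0 1 = 1 :=
  (AddMonoidAlgebra.one_def).symm

abbrev Qr := Polynomial ℂ ⧸ Ideal.span {Polynomial.X ^ 3 - Polynomial.C t}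

abbrev Ihv : Ideal LaurentTwo :=
  Ideal.span {laurentMono 1 0 1 - laurentMono (-1) (-1) t,
              laurentMono 0 1 1 - laurentMono (-1) (-1) t}

abbrev LQ := LaurentTwo ⧸ Ihv t

def z : Qr t := Ideal.Quotient.mk _ Polynomial.X

lemma zcube : (z t) ^ 3 = algebraMap ℂ (Qr t) t := by
  have h0 : (Ideal.Quotient.mkₐ ℂ (Ideal.span {Polynomial.X ^ 3 - Polynomial.C t}))
      (Polynomial.X ^ 3 - Polynomial.C t) = 0 := by
    simpa [Ideal.Quotient.mkₐ_eq_mk] using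
      Ideal.Quotient.eq_zero_iff_mem.mpr (Ideal.subset_span rfl)
  rw [map_sub] at h0
  have h1 := sub_eq_zero.mp h0
  have h2 : (z t) ^ 3 = (Ideal.Quotient.mkₐ ℂ (Ideal.span {Polynomial.X ^ 3 - Polynomial.C t}))
      (Polynomial.X ^ 3) := by
    simp [z, Ideal.Quotient.mkₐ_eq_mk]
  rw [h2, h1]
  exact (Ideal.Quotient.mkₐ ℂ (Ideal.span {Polynomial.X ^ 3 - Polynomial.C t})).commutes t

variable (ht : t ≠ 0)

/-- `z` as a unit of `Qr t`. -/
def U : (Qr t)ˣ where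
  val := z t
  inv := algebraMap ℂ (Qr t) t⁻¹ * (z t) ^ 2
  val_inv := by
    have h3 := zcube t
    have : z t * (algebraMap ℂ (Qr t) t⁻¹ * z t ^ 2)
        = algebraMap ℂ (Qr t) t⁻¹ * (z t ^ 3) := by ring
    rw [this, h3, ← map_mul, inv_mul_cancel₀ ht, map_one]
  inv_val := by
    have h3 := zcube t
    have : (algebraMap ℂ (Qr t) t⁻¹ * z t ^ 2) * z t
        = algebraMap ℂ (Qr t) t⁻¹ * (z t ^ 3) := by ring
    rw [this, h3, ← map_mul, inv_mul_cancel₀ ht, map_one]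

lemma Uzpow_mul (m n : ℤ) :
    (↑(U t ht ^ m) : Qr t) * ↑(U t ht ^ n) = ↑(U t ht ^ (m + n)) := by
  rw [← Units.val_mul, ← zpow_add]

lemma Uzpow_three : (↑(U t ht ^ (3 : ℤ)) : Qr t) = algebraMap ℂ (Qr t) t := by
  rw [show (3 : ℤ) = ((3 : ℕ) : ℤ) from rfl, zpow_natCast, Units.val_pow_eq_pow_val]
  exact zcube t

lemma t_smul_U_neg_two : t • (↑(U t ht ^ (-2 : ℤ)) : Qr t) = ↑(U t ht) := by
  refine (Units.mul_right_inj (U t ht ^ (2 : ℤ))).mp ?_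
  rw [mul_smul_comm, Uzpow_mul]
  have h1 : (↑(U t ht ^ (2 : ℤ)) : Qr t) * ↑(U t ht) = ↑(U t ht ^ (3 : ℤ)) := by
    rw [show (↑(U t ht) : Qr t) = ↑(U t ht ^ (1 : ℤ)) from by rw [zpow_one], Uzpow_mul]
    norm_num
  rw [h1, Uzpow_three, show ((2 : ℤ) + -2) = 0 from by norm_num, zpow_zero, Units.val_one]
  exact (Algebra.smul_def t (1 : Qr t)).trans (by rw [mul_one])

/-- monoid hom `Multiplicative (ℤ × ℤ) →* Qr t`, `(i,j) ↦ z^(i+j)`. -/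
def φ : Multiplicative (ℤ × ℤ) →* Qr t where
  toFun g := ↑(U t ht ^ ((Multiplicative.toAdd g).1 + (Multiplicative.toAdd g).2))
  map_one' := by simp
  map_mul' g h := by
    have h1 : (Multiplicative.toAdd (g * h)).1 + (Multiplicative.toAdd (g * h)).2 =
        ((Multiplicative.toAdd g).1 + (Multiplicative.toAdd g).2) +
        ((Multiplicative.toAdd h).1 + (Multiplicative.toAdd h).2) := by
      simp only [toAdd_mul, Prod.fst_add, Prod.snd_add]; ring
    rw [h1, zpow_add, Units.val_mul]

def G' : LaurentTwo →ₐ[ℂ] Qr t := AddMonoidAlgebra.lift ℂ (Qr t) (ℤ × ℤ) (φ t ht)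

lemma G'_mono (i j : ℤ) (c : ℂ) :
    G' t ht (laurentMono i j c) = c • ↑(U t ht ^ (i + j)) := by
  rw [laurentMono, G']
  exact AddMonoidAlgebra.lift_single (φ t ht) (i, j) c

lemma G'_gen1 : G' t ht (laurentMono 1 0 1 - laurentMono (-1) (-1) t) = 0 := by
  rw [map_sub, G'_mono, G'_mono, one_smul,
    show ((1 : ℤ) + 0) = 1 from by norm_num,
    show ((-1 : ℤ) + -1) = -2 from by norm_num,
    t_smul_U_neg_two, zpow_one, sub_self]

lemma G'_gen2 : G' t ht (laurentMono 0 1 1 - laurentMono (-1) (-1) t) = 0 := by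
  rw [map_sub, G'_mono, G'_mono, one_smul,
    show ((0 : ℤ) + 1) = 1 from by norm_num,
    show ((-1 : ℤ) + -1) = -2 from by norm_num,
    t_smul_U_neg_two, zpow_one, sub_self]

def G : LQ t →ₐ[ℂ] Qr t :=
  Ideal.Quotient.liftₐ (Ihv t) (G' t ht) (by
    intro a ha
    have hle : Ihv t ≤ RingHom.ker (G' t ht).toRingHom := by
      rw [Ideal.span_le]
      rintro b hb
      simp only [Set.mem_insert_iff, Set.mem_singleton_iff] at hb
      rcases hb with rfl | rfl
      · exact G'_gen1 t ht
      · exact G'_gen2 t ht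
    exact RingHom.mem_ker.mp (hle ha))

lemma mono_cube : (laurentMono 1 0 1) ^ 3 = laurentMono 3 0 1 := by
  rw [pow_succ, pow_two, laurentMono_mul, laurentMono_mul]
  norm_num

lemma algebraMap_laurent (c : ℂ) : algebraMap ℂ LaurentTwo c = laurentMono 0 0 c := by
  rw [laurentMono]
  rfl

lemma cube_mem : laurentMono 3 0 1 - laurentMono 0 0 t ∈ Ihv t := by
  rw [Ideal.mem_span_pair]
  refine ⟨laurentMono 2 0 1 + laurentMono 1 1 1, -(laurentMono 2 0 1), ?_⟩
  simp only [mul_sub, add_mul, neg_mul, neg_sub, laurentMono_mul, one_mul, mul_one]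
  norm_num
  abel

def a0 : LQ t := Ideal.Quotient.mk _ (laurentMono 1 0 1)

def F : Qr t →ₐ[ℂ] LQ t :=
  Ideal.Quotient.liftₐ _ (Polynomial.aeval (a0 t)) (by
    intro p hp
    have hle : Ideal.span {Polynomial.X ^ 3 - Polynomial.C t} ≤
        RingHom.ker (Polynomial.aeval (a0 t) : Polynomial ℂ →ₐ[ℂ] LQ t).toRingHom := by
      rw [Ideal.span_le, Set.singleton_subset_iff]
      have : (Polynomial.aeval (a0 t)) (Polynomial.X ^ 3 - Polynomial.C t) = 0 := by
        rw [map_sub, map_pow, Polynomial.aeval_X, Polynomial.aeval_C]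
        have h1 : (a0 t) ^ 3 = Ideal.Quotient.mk (Ihv t) (laurentMono 3 0 1) := by
          rw [a0, ← map_pow, mono_cube]
        have h2 : algebraMap ℂ (LQ t) t = Ideal.Quotient.mk (Ihv t) (laurentMono 0 0 t) := by
          rw [← algebraMap_laurent]
          exact ((Ideal.Quotient.mkₐ ℂ (Ihv t)).commutes t).symm
        rw [h1, h2, ← map_sub, Ideal.Quotient.eq_zero_iff_mem]
        exact cube_mem t
      exact this
    exact RingHom.mem_ker.mp (hle hp))

lemma F_z : F t (z t) = a0 t := by
  rw [F, z]
  exact Polynomial.aeval_X (a0 t)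

lemma G_mk_mono (i j : ℤ) (c : ℂ) :
    G t ht (Ideal.Quotient.mk (Ihv t) (laurentMono i j c)) = c • ↑(U t ht ^ (i + j)) := by
  rw [G]
  exact G'_mono t ht i j c

lemma G_a0 : G t ht (a0 t) = z t := by
  rw [a0, G_mk_mono, one_smul, show ((1 : ℤ) + 0) = 1 from by norm_num, zpow_one]
  rfl

/-- The monoid hom sending a lattice point to the class of its monomial. -/
def M : Multiplicative (ℤ × ℤ) →* LQ t :=
  ((Ideal.Quotient.mk (Ihv t)) : LaurentTwo →+* LQ t).toMonoidHom.comp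
    (AddMonoidAlgebra.of ℂ (ℤ × ℤ))

/-- units of `LQ t` from group elements. -/
def Ψ : Multiplicative (ℤ × ℤ) →* (LQ t)ˣ :=
  Units.liftRight (M t)
    (fun g =>
      { val := Ideal.Quotient.mk (Ihv t)
          (laurentMono (Multiplicative.toAdd g).1 (Multiplicative.toAdd g).2 1)
        inv := Ideal.Quotient.mk (Ihv t)
          (laurentMono (-(Multiplicative.toAdd g).1) (-(Multiplicative.toAdd g).2) 1)
        val_inv := by
          rw [← map_mul, laurentMono_mul]
          norm_num
          rw [laurentMono_one, map_one]
        inv_val := by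
          rw [← map_mul, laurentMono_mul]
          norm_num
          rw [laurentMono_one, map_one] })
    (fun g => rfl)

lemma Psi_val (i j : ℤ) :
    (↑(Ψ t (Multiplicative.ofAdd ((i, j) : ℤ × ℤ))) : LQ t)
      = Ideal.Quotient.mk (Ihv t) (laurentMono i j 1) :=
  rfl

lemma Psi_xy : Ψ t (Multiplicative.ofAdd ((1, 0) : ℤ × ℤ))
    = Ψ t (Multiplicative.ofAdd ((0, 1) : ℤ × ℤ)) := by
  apply Units.ext
  rw [Psi_val, Psi_val, Ideal.Quotient.mk_eq_mk_iff_sub_mem]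
  have h : (laurentMono 1 0 1 - laurentMono 0 1 1 : LaurentTwo)
      = (laurentMono 1 0 1 - laurentMono (-1) (-1) t)
        - (laurentMono 0 1 1 - laurentMono (-1) (-1) t) := by
    abel
  rw [h]
  exact sub_mem (Ideal.subset_span (by simp)) (Ideal.subset_span (by simp))

lemma Psi_eq_pow (i j : ℤ) :
    Ψ t (Multiplicative.ofAdd ((i, j) : ℤ × ℤ))
      = Ψ t (Multiplicative.ofAdd ((1, 0) : ℤ × ℤ)) ^ (i + j) := by
  have hsplit : (Multiplicative.ofAdd ((i, j) : ℤ × ℤ))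
      = (Multiplicative.ofAdd ((1, 0) : ℤ × ℤ)) ^ i *
        (Multiplicative.ofAdd ((0, 1) : ℤ × ℤ)) ^ j := by
    rw [← ofAdd_zsmul, ← ofAdd_zsmul, ← ofAdd_add]
    congr 1
    simp [Prod.ext_iff]
  rw [hsplit, map_mul, map_zpow, map_zpow, ← Psi_xy, ← zpow_add]

lemma FU_eq (n : ℤ) :
    F t (↑(U t ht ^ n) : Qr t)
      = ↑(Ψ t (Multiplicative.ofAdd ((1, 0) : ℤ × ℤ)) ^ n) := by
  have hmap : F t (↑(U t ht ^ n) : Qr t)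
      = ↑((Units.map ((F t : Qr t →ₐ[ℂ] LQ t) : Qr t →* LQ t) (U t ht)) ^ n) := by
    rw [← map_zpow (Units.map ((F t : Qr t →ₐ[ℂ] LQ t) : Qr t →* LQ t))]
    rfl
  rw [hmap]
  congr 2
  apply Units.ext
  show F t (↑(U t ht)) = _
  rw [show (↑(U t ht) : Qr t) = z t from rfl, F_z, Psi_val]
  rfl

lemma comp1 : (G t ht).comp (F t) = AlgHom.id ℂ (Qr t) := by
  apply Ideal.Quotient.algHom_ext
  apply Polynomial.algHom_ext
  show G t ht (F t (Ideal.Quotient.mk _ Polynomial.X)) = Ideal.Quotient.mk _ Polynomial.X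
  rw [show (Ideal.Quotient.mk (Ideal.span {Polynomial.X ^ 3 - Polynomial.C t})) Polynomial.X
      = z t from rfl, F_z, G_a0]

lemma comp2 : (F t).comp (G t ht) = AlgHom.id ℂ (LQ t) := by
  apply Ideal.Quotient.algHom_ext
  apply AddMonoidAlgebra.algHom_ext
  intro g
  obtain ⟨i, j⟩ := g
  show F t (G t ht (Ideal.Quotient.mk _ (laurentMono i j 1)))
      = Ideal.Quotient.mk _ (laurentMono i j 1)
  rw [G_mk_mono, one_smul, FU_eq, ← Psi_eq_pow]
  exact Psi_val t i j
  exact Subsingleton.elim _ _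

end

end HVaux

/-- The Jacobian ring of the Hori–Vafa superpotential `W = x + y + t/(xy)`,
namely `ℂ[x^±, y^±]/(x∂W/∂x, y∂W/∂y)` with `x∂W/∂x = x - t/(xy)` and
`y∂W/∂y = y - t/(xy)`, is isomorphic as a ring to `ℂ[z]/(z³ - t)` for
`t ≠ 0`, matching `QH*(ℙ²) = ℂ[H]/(H³ - t)` under `H ↦ x`. -/
theorem jacobian_ring_hori_vafa (t : ℂ) (ht : t ≠ 0) :
    ∃ e : (Polynomial ℂ ⧸ Ideal.span {Polynomial.X ^ 3 - Polynomial.C t}) ≃+*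
        (LaurentTwo ⧸ Ideal.span
          {laurentMono 1 0 1 - laurentMono (-1) (-1) t,
           laurentMono 0 1 1 - laurentMono (-1) (-1) t}),
      e (Ideal.Quotient.mk _ Polynomial.X) =
        Ideal.Quotient.mk _ (laurentMono 1 0 1) := by
  refine ⟨(AlgEquiv.ofAlgHom (HVaux.F t) (HVaux.G t ht)
    (HVaux.comp2 t ht) (HVaux.comp1 t ht)).toRingEquiv, ?_⟩
  exact HVaux.F_z t
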